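/- Let p : (0,1) → ℝ be integrable, non-decreasing on (0, 1/2), and symmetric (p(x) = p(1-x) for all x ∈ (0,1)). Let φ : (0,1) → ℝ be convex, integrable, and symmetric (φ(x) = φ(1-x) for all x ∈ (0,1)). Then ∫₀¹ p(x)φ(x) dx ≤ (∫₀¹ p(x) dx) · (∫₀¹ φ(x) dx). -/

import Mathlib

open MeasureTheory Set

private lemma phi_anti {φ : ℝ → ℝ} (hφ_conv : ConvexOn ℝ (Ioo 0 1) φ)
    (hφ_symm : ∀ x ∈ Ioo (0:ℝ) 1, φ x = φ (1 - x)) :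
    ∀ a b : ℝ, a ∈ Ioo (0:ℝ) (1/2) → b ∈ Ioo (0:ℝ) (1/2) → a ≤ b → φ b ≤ φ a := by
  intro a b ha hb hab
  rcases eq_or_lt_of_le hab with rfl | hab
  · exact le_rfl
  · set t : ℝ := (1 - a - b) / (1 - 2*a) with ht
    have h2a : (0:ℝ) < 1 - 2*a := by nlinarith [ha.2]
    have ht0 : 0 ≤ t := by
      apply div_nonneg _ h2a.le
      nlinarith [hb.2]
    have ht1 : 0 ≤ 1 - t := by
      have : t ≤ 1 := by
        rw [div_le_one h2a]; nlinarith
      linarith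
    have hmem1 : a ∈ Ioo (0:ℝ) 1 := ⟨ha.1, by linarith [ha.2]⟩
    have hmem2 : (1 - a) ∈ Ioo (0:ℝ) 1 := ⟨by linarith [ha.2], by linarith [ha.1]⟩
    have hcomb : t * a + (1 - t) * (1 - a) = b := by
      have key : t * (1 - 2*a) = 1 - a - b := by
        rw [ht]; exact div_mul_cancel₀ _ h2a.ne'
      linear_combination (-1:ℝ) * key
    have := hφ_conv.2 hmem1 hmem2 ht0 ht1 (by ring)
    simp only [smul_eq_mul] at this
    rw [hcomb] at this
    rw [← hφ_symm a hmem1] at this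
    linarith

private lemma key_pointwise {p φ : ℝ → ℝ}
    (hp_mono : MonotoneOn p (Ioo 0 (1/2)))
    (hp_symm : ∀ x ∈ Ioo (0:ℝ) 1, p x = p (1 - x))
    (hφ_conv : ConvexOn ℝ (Ioo 0 1) φ)
    (hφ_symm : ∀ x ∈ Ioo (0:ℝ) 1, φ x = φ (1 - x)) :
    ∀ x ∈ Ioo (0:ℝ) 1, ∀ y ∈ Ioo (0:ℝ) 1, x ≠ 1/2 → y ≠ 1/2 →
      (p x - p y) * (φ x - φ y) ≤ 0 := by
  have hred : ∀ x ∈ Ioo (0:ℝ) 1, x ≠ 1/2 →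
      min x (1-x) ∈ Ioo (0:ℝ) (1/2) ∧ p x = p (min x (1-x)) ∧ φ x = φ (min x (1-x)) := by
    intro x hx hx2
    rcases lt_or_gt_of_ne hx2 with h | h
    · have : min x (1-x) = x := min_eq_left (by linarith)
      rw [this]
      exact ⟨⟨hx.1, h⟩, rfl, rfl⟩
    · have : min x (1-x) = 1 - x := min_eq_right (by linarith)
      rw [this]
      exact ⟨⟨by linarith [hx.2], by linarith⟩, hp_symm x hx, hφ_symm x hx⟩
  have key : ∀ x ∈ Ioo (0:ℝ) 1, ∀ y ∈ Ioo (0:ℝ) 1, x ≠ 1/2 → y ≠ 1/2 →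
      min x (1-x) ≤ min y (1-y) → (p x - p y) * (φ x - φ y) ≤ 0 := by
    intro x hx y hy hx2 hy2 hle
    obtain ⟨hmx, hpx, hφx⟩ := hred x hx hx2
    obtain ⟨hmy, hpy, hφy⟩ := hred y hy hy2
    have h1 : p x ≤ p y := by rw [hpx, hpy]; exact hp_mono hmx hmy hle
    have h2 : φ y ≤ φ x := by
      rw [hφx, hφy]; exact phi_anti hφ_conv hφ_symm _ _ hmx hmy hle
    nlinarith
  intro x hx y hy hx2 hy2
  rcases le_total (min x (1-x)) (min y (1-y)) with h | h
  · exact key x hx y hy hx2 hy2 h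
  · have := key y hy x hx hy2 hx2 h
    nlinarith

/-- **Symmetric case of the Levin–Stečkin inequality.** If `p` is integrable on `(0,1)`,
non-decreasing on `(0, 1/2)` and symmetric, and `φ` is convex, integrable and symmetric
on `(0,1)` (with `p·φ` integrable), then `∫₀¹ p φ ≤ (∫₀¹ p) (∫₀¹ φ)`. -/
theorem levin_steckin_symmetric (p φ : ℝ → ℝ)
    (hp_int : IntegrableOn p (Ioo 0 1))
    (hp_mono : MonotoneOn p (Ioo 0 (1/2)))
    (hp_symm : ∀ x ∈ Ioo (0:ℝ) 1, p x = p (1 - x))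
    (hφ_conv : ConvexOn ℝ (Ioo 0 1) φ)
    (hφ_int : IntegrableOn φ (Ioo 0 1))
    (hφ_symm : ∀ x ∈ Ioo (0:ℝ) 1, φ x = φ (1 - x))
    (hpφ_int : IntegrableOn (fun x => p x * φ x) (Ioo 0 1)) :
    ∫ x in Ioo (0:ℝ) 1, p x * φ x ≤
      (∫ x in Ioo (0:ℝ) 1, p x) * ∫ x in Ioo (0:ℝ) 1, φ x := by
  set I : Set ℝ := Ioo 0 1 with hI
  set μ : Measure ℝ := volume.restrict I with hμ
  have hμI : μ Set.univ = 1 := by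
    rw [hμ, Measure.restrict_apply_univ, hI, Real.volume_Ioo]
    norm_num
  have hfin : IsFiniteMeasure μ := ⟨by rw [hμI]; exact ENNReal.one_lt_top⟩
  have hone : Integrable (fun _ : ℝ => (1:ℝ)) μ := integrable_const 1
  -- integrability of the four pieces on the product
  have h1 : Integrable (fun z : ℝ × ℝ => (p z.1 * φ z.1) * 1) (μ.prod μ) :=
    hpφ_int.mul_prod hone
  have h2 : Integrable (fun z : ℝ × ℝ => 1 * (p z.2 * φ z.2)) (μ.prod μ) :=
    hone.mul_prod hpφ_int
  have h3 : Integrable (fun z : ℝ × ℝ => p z.1 * φ z.2) (μ.prod μ) :=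
    hp_int.mul_prod hφ_int
  have h4 : Integrable (fun z : ℝ × ℝ => φ z.1 * p z.2) (μ.prod μ) :=
    hφ_int.mul_prod hp_int
  have hexpand : ∀ z : ℝ × ℝ, (p z.1 - p z.2) * (φ z.1 - φ z.2) =
      (p z.1 * φ z.1) * 1 + 1 * (p z.2 * φ z.2) - p z.1 * φ z.2 - φ z.1 * p z.2 := by
    intro z; ring
  -- the integrand is a.e. nonpositive
  have hae : ∀ᵐ z ∂(μ.prod μ), (p z.1 - p z.2) * (φ z.1 - φ z.2) ≤ 0 := by
    have hprod : μ.prod μ = (volume.prod volume).restrict (I ×ˢ I) := by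
      rw [hμ, Measure.prod_restrict]
    have hmemI : ∀ᵐ z ∂(μ.prod μ), z ∈ I ×ˢ I := by
      rw [hprod]
      exact ae_restrict_mem (measurableSet_Ioo.prod measurableSet_Ioo)
    have hnull : (μ.prod μ) ({(1/2 : ℝ)} ×ˢ (Set.univ : Set ℝ) ∪
        (Set.univ : Set ℝ) ×ˢ {(1/2 : ℝ)}) = 0 := by
      apply measure_union_null
      · rw [Measure.prod_prod]
        simp [hμ]
      · rw [Measure.prod_prod]
        simp [hμ]
    filter_upwards [hmemI, compl_mem_ae_iff.mpr hnull] with z hz hz'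
    simp only [Set.mem_compl_iff, Set.mem_union, Set.mem_prod, Set.mem_singleton_iff,
      Set.mem_univ, and_true, true_and, not_or] at hz'
    exact key_pointwise hp_mono hp_symm hφ_conv hφ_symm z.1 hz.1 z.2 hz.2 hz'.1 hz'.2
  have hint_nonpos : ∫ z, (p z.1 - p z.2) * (φ z.1 - φ z.2) ∂(μ.prod μ) ≤ 0 :=
    integral_nonpos_of_ae hae
  -- compute the double integral
  have hint1 : ∫ _ : ℝ, (1:ℝ) ∂μ = 1 := by
    rw [integral_const]; simp [Measure.real, hμI]
  have eA : ∫ z : ℝ × ℝ, (p z.1 * φ z.1) * 1 ∂(μ.prod μ)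
      = (∫ x, p x * φ x ∂μ) * (∫ _ : ℝ, (1:ℝ) ∂μ) :=
    integral_prod_mul (fun x => p x * φ x) (fun _ => 1)
  have eB : ∫ z : ℝ × ℝ, 1 * (p z.2 * φ z.2) ∂(μ.prod μ)
      = (∫ _ : ℝ, (1:ℝ) ∂μ) * (∫ x, p x * φ x ∂μ) :=
    integral_prod_mul (fun _ => 1) (fun x => p x * φ x)
  have eC : ∫ z : ℝ × ℝ, p z.1 * φ z.2 ∂(μ.prod μ)
      = (∫ x, p x ∂μ) * (∫ x, φ x ∂μ) :=
    integral_prod_mul (fun x => p x) (fun x => φ x)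
  have eD : ∫ z : ℝ × ℝ, φ z.1 * p z.2 ∂(μ.prod μ)
      = (∫ x, φ x ∂μ) * (∫ x, p x ∂μ) :=
    integral_prod_mul (fun x => φ x) (fun x => p x)
  have hX1 : Integrable (fun z : ℝ × ℝ =>
      (p z.1 * φ z.1) * 1 + 1 * (p z.2 * φ z.2)) (μ.prod μ) := h1.add h2
  have hX2 : Integrable (fun z : ℝ × ℝ =>
      (p z.1 * φ z.1) * 1 + 1 * (p z.2 * φ z.2) - p z.1 * φ z.2) (μ.prod μ) := hX1.sub h3
  have s0 : ∫ z, (p z.1 - p z.2) * (φ z.1 - φ z.2) ∂(μ.prod μ)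
      = ∫ z : ℝ × ℝ, ((p z.1 * φ z.1) * 1 + 1 * (p z.2 * φ z.2)
          - p z.1 * φ z.2 - φ z.1 * p z.2) ∂(μ.prod μ) :=
    integral_congr_ae (Filter.Eventually.of_forall hexpand)
  have s1 : ∫ z : ℝ × ℝ, ((p z.1 * φ z.1) * 1 + 1 * (p z.2 * φ z.2)
          - p z.1 * φ z.2 - φ z.1 * p z.2) ∂(μ.prod μ)
      = (∫ z : ℝ × ℝ, ((p z.1 * φ z.1) * 1 + 1 * (p z.2 * φ z.2)
          - p z.1 * φ z.2) ∂(μ.prod μ))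
        - ∫ z : ℝ × ℝ, φ z.1 * p z.2 ∂(μ.prod μ) := integral_sub hX2 h4
  have s2 : ∫ z : ℝ × ℝ, ((p z.1 * φ z.1) * 1 + 1 * (p z.2 * φ z.2)
          - p z.1 * φ z.2) ∂(μ.prod μ)
      = (∫ z : ℝ × ℝ, ((p z.1 * φ z.1) * 1 + 1 * (p z.2 * φ z.2)) ∂(μ.prod μ))
        - ∫ z : ℝ × ℝ, p z.1 * φ z.2 ∂(μ.prod μ) := integral_sub hX1 h3
  have s3 : ∫ z : ℝ × ℝ, ((p z.1 * φ z.1) * 1 + 1 * (p z.2 * φ z.2)) ∂(μ.prod μ)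
      = (∫ z : ℝ × ℝ, (p z.1 * φ z.1) * 1 ∂(μ.prod μ))
        + ∫ z : ℝ × ℝ, 1 * (p z.2 * φ z.2) ∂(μ.prod μ) := integral_add h1 h2
  rw [s0, s1, s2, s3, eA, eB, eC, eD, hint1] at hint_nonpos
  have : ∫ x, p x * φ x ∂μ ≤ (∫ x, p x ∂μ) * (∫ x, φ x ∂μ) := by linarith
  simpa [hμ, hI] using this
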